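/- arXiv:1204.0411 — 2 statements merged into one kernel-verified Lean document; each statement's English description precedes it below -/
import Mathlib

section
/- Every 2-loop contribution to the loop expansion of the Chern–Simons partition function on the noncommutative 3-torus vanishes. Precisely: fix a real skew-symmetric 3×3 matrix Θ and indices a,b,c ∈ {1,2,3}; for q,r ∈ ℤ³ with q ≠ 0, r ≠ 0 and q ≠ r define S(q,r) := sin²(½⟨q,Θr⟩) · q_a·(q_b − r_b)·r_c / (‖q‖²·‖q−r‖²·‖r‖²). Then S(−q,−r) = −S(q,r) for all such pairs, and consequently for every finite set T of such pairs (q,r) that is invariant under the involution (q,r) ↦ (−q,−r), one has Σ_{(q,r)∈T} S(q,r) = 0. In particular the coefficient of k^{−1} in the loop expansion series of the partition function vanishes. -/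
/-!
Every 2-loop contribution to the loop expansion of the Chern–Simons partition
function on the noncommutative 3-torus vanishes.
-/

open scoped BigOperators

/-- The pairing ⟨k, Θ q⟩ = Σ_{i,j} k_i Θ_{ij} q_j. -/
def thetaPairing (Θ : Matrix (Fin 3) (Fin 3) ℝ) (k q : Fin 3 → ℤ) : ℝ :=
  ∑ i : Fin 3, ∑ j : Fin 3, (k i : ℝ) * Θ i j * (q j : ℝ)

/-- Squared euclidean norm ‖q‖² of a lattice point. -/
def latticeNormSq (q : Fin 3 → ℤ) : ℝ :=
  ∑ i : Fin 3, ((q i : ℝ)) ^ 2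

/-- The 2-loop summand
`S(q,r) = sin²(½⟨q,Θr⟩) · q_a (q_b − r_b) r_c / (‖q‖² ‖q−r‖² ‖r‖²)`. -/
noncomputable def twoLoopSummand (Θ : Matrix (Fin 3) (Fin 3) ℝ) (a b c : Fin 3)
    (q r : Fin 3 → ℤ) : ℝ :=
  (Real.sin ((1 / 2) * thetaPairing Θ q r)) ^ 2 *
      (q a : ℝ) * ((q b : ℝ) - (r b : ℝ)) * (r c : ℝ) /
    (latticeNormSq q * latticeNormSq (q - r) * latticeNormSq r)


lemma pairing_neg (Θ : Matrix (Fin 3) (Fin 3) ℝ) (q r : Fin 3 → ℤ) :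
    thetaPairing Θ (-q) (-r) = thetaPairing Θ q r := by
  simp [thetaPairing]

lemma norm_neg' (q : Fin 3 → ℤ) : latticeNormSq (-q) = latticeNormSq q := by
  simp [latticeNormSq]

lemma summand_neg (Θ : Matrix (Fin 3) (Fin 3) ℝ) (a b c : Fin 3) (q r : Fin 3 → ℤ) :
    twoLoopSummand Θ a b c (-q) (-r) = - twoLoopSummand Θ a b c q r := by
  have h : -q - -r = -(q - r) := by ring
  rw [twoLoopSummand, twoLoopSummand, pairing_neg, h, norm_neg', norm_neg', norm_neg']
  simp only [Pi.neg_apply, Int.cast_neg]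
  ring

theorem two_loop_contributions_vanish (Θ : Matrix (Fin 3) (Fin 3) ℝ)
    (hΘ : Θ.transpose = -Θ) (a b c : Fin 3) :
    (∀ q r : Fin 3 → ℤ, q ≠ 0 → r ≠ 0 → q ≠ r →
      twoLoopSummand Θ a b c (-q) (-r) = - twoLoopSummand Θ a b c q r) ∧
    (∀ T : Finset ((Fin 3 → ℤ) × (Fin 3 → ℤ)),
      (∀ p ∈ T, p.1 ≠ 0 ∧ p.2 ≠ 0 ∧ p.1 ≠ p.2) →
      (∀ p ∈ T, (-p.1, -p.2) ∈ T) →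
      ∑ p ∈ T, twoLoopSummand Θ a b c p.1 p.2 = 0) := by
  refine ⟨fun q r _ _ _ => summand_neg Θ a b c q r, fun T hT hinv => ?_⟩
  refine Finset.sum_involution (fun p _ => (-p.1, -p.2)) ?_ ?_ (fun p hp => hinv p hp) ?_
  · intro p _
    simp [summand_neg]
  · intro p hp _ hcon
    have h1 : -p.1 = p.1 := congrArg Prod.fst hcon
    have : p.1 = 0 := by
      funext i
      have h2 := congrFun h1 i
      simp only [Pi.neg_apply] at h2
      simpa using congrArg (· + p.1 i) h2.symm
    exact (hT p hp).1 this
  · intro p _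
    simp
end

section
/- Let n ≥ 1 be an integer. The set of matrices Θ ∈ Mₙ(ℝ) that are not diophantine — i.e. for which there is no u ∈ ℤⁿ such that the vector Θu is diophantine — has Lebesgue measure zero in Mₙ(ℝ) ≅ ℝ^{n²}. In other words, almost every real n×n matrix is diophantine. -/
/-!
Almost every real n×n matrix (identified with an element of ℝ^{n²}) is
diophantine: the set of non-diophantine matrices has Lebesgue measure zero.
-/

open scoped BigOperators

/-- `a ∈ ℝⁿ` is δ-diophantine if there is `c > 0` with
`|q·a − m| ≥ c·‖q‖^{−δ}` for all `q ∈ ℤⁿ \ {0}` and all `m ∈ ℤ`. -/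
def IsDeltaDiophantine {n : ℕ} (δ : ℝ) (a : Fin n → ℝ) : Prop :=
  ∃ c > (0 : ℝ), ∀ q : Fin n → ℤ, q ≠ 0 → ∀ m : ℤ,
    c * (Real.sqrt (∑ i : Fin n, ((q i : ℝ)) ^ 2)) ^ (-δ) ≤
      |(∑ i : Fin n, (q i : ℝ) * a i) - (m : ℝ)|

/-- A vector is diophantine if it is δ-diophantine for some δ > 0. -/
def IsDiophantineVector {n : ℕ} (a : Fin n → ℝ) : Prop :=
  ∃ δ > (0 : ℝ), IsDeltaDiophantine δ a

/-- A matrix Θ (viewed as an element of ℝⁿ ⊗ ℝⁿ ≅ ℝ^{n²}) is diophantine if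
there is `u ∈ ℤⁿ` such that the vector `Θu` is diophantine. -/
def IsDiophantineMatrix {n : ℕ} (Θ : Fin n → Fin n → ℝ) : Prop :=
  ∃ u : Fin n → ℤ, IsDiophantineVector (fun i => ∑ j : Fin n, Θ i j * (u j : ℝ))

open MeasureTheory Filter Topology

namespace ADM

variable {N : ℕ}

noncomputable def Nq (q : Fin N → ℤ) : ℝ := Real.sqrt (∑ i : Fin N, ((q i : ℝ)) ^ 2)

def Bq (q : Fin N → ℤ) : ℕ := Finset.univ.sup fun i => (q i).natAbs

lemma one_le_Bq {q : Fin N → ℤ} (hq : q ≠ 0) : 1 ≤ Bq q := by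
  obtain ⟨i, hi⟩ := Function.ne_iff.mp hq
  have h1 : 1 ≤ (q i).natAbs := by
    simp only [Pi.zero_apply] at hi; omega
  exact le_trans h1 (Finset.le_sup (f := fun i => (q i).natAbs) (Finset.mem_univ i))

lemma abs_le_Bq (q : Fin N → ℤ) (i : Fin N) : |(q i : ℝ)| ≤ (Bq q : ℝ) := by
  have h : (q i).natAbs ≤ Bq q := Finset.le_sup (f := fun i => (q i).natAbs) (Finset.mem_univ i)
  calc |(q i : ℝ)| = ((q i).natAbs : ℝ) := by simp [Nat.cast_natAbs]
    _ ≤ (Bq q : ℝ) := by exact_mod_cast h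

lemma abs_le_Nq (q : Fin N → ℤ) (i : Fin N) : |(q i : ℝ)| ≤ Nq q := by
  rw [← Real.sqrt_sq_eq_abs]
  exact Real.sqrt_le_sqrt (Finset.single_le_sum (f := fun j => ((q j : ℝ))^2)
    (fun j _ => sq_nonneg _) (Finset.mem_univ i))

lemma Bq_le_Nq (hN : 1 ≤ N) (q : Fin N → ℤ) : (Bq q : ℝ) ≤ Nq q := by
  have hne : (Finset.univ : Finset (Fin N)).Nonempty := by
    simpa [Finset.univ_nonempty_iff] using Fin.pos_iff_nonempty.mp hN
  obtain ⟨i, _, hi⟩ := Finset.exists_mem_eq_sup Finset.univ hne fun i => (q i).natAbs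
  have h : (Bq q : ℝ) = |(q i : ℝ)| := by
    rw [Bq, hi]; simp [Nat.cast_natAbs]
  rw [h]; exact abs_le_Nq q i

lemma one_le_Nq (hN : 1 ≤ N) {q : Fin N → ℤ} (hq : q ≠ 0) : 1 ≤ Nq q := by
  have h1 : (1 : ℝ) ≤ (Bq q : ℝ) := by exact_mod_cast one_le_Bq hq
  linarith [Bq_le_Nq hN q]

lemma Nq_pos (hN : 1 ≤ N) {q : Fin N → ℤ} (hq : q ≠ 0) : 0 < Nq q :=
  lt_of_lt_of_le one_pos (one_le_Nq hN hq)

/-- Volume of a slab intersected with a box. -/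
lemma slab_vol {q : Fin N → ℤ} {i₀ : Fin N} (hq : q i₀ ≠ 0) (m ε R : ℝ) :
    volume {a : Fin N → ℝ | (∀ i, |a i| ≤ R) ∧ |(∑ i, (q i : ℝ) * a i) - m| < ε}
      ≤ ENNReal.ofReal (2 * ε) * (ENNReal.ofReal (2 * R)) ^ (N - 1) := by
  classical
  set M : Matrix (Fin N) (Fin N) ℝ :=
    (1 : Matrix (Fin N) (Fin N) ℝ).updateRow i₀ (fun j => (q j : ℝ)) with hM
  have hdet : M.det = (q i₀ : ℝ) := by
    have hv : (fun j => (q j : ℝ)) = ∑ k, (q k : ℝ) • (1 : Matrix (Fin N) (Fin N) ℝ) k := by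
      funext j; simp [Matrix.one_apply]
    rw [hM, hv, Matrix.det_updateRow_sum]; simp
  set L := Matrix.toLin' M with hL
  have hLdet : LinearMap.det L = (q i₀ : ℝ) := by rw [hL, LinearMap.det_toLin', hdet]
  have hLdet0 : LinearMap.det L ≠ 0 := by
    rw [hLdet]; exact_mod_cast hq
  set T : Set (Fin N → ℝ) :=
    Set.univ.pi (fun i => if i = i₀ then Metric.ball m ε else Set.Icc (-R) R) with hT
  have hsub : {a : Fin N → ℝ | (∀ i, |a i| ≤ R) ∧ |(∑ i, (q i : ℝ) * a i) - m| < ε}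
      ⊆ L ⁻¹' T := by
    intro a ha
    obtain ⟨hbox, hsl⟩ := ha
    intro i _
    have hLa : L a i = ∑ j, M i j * a j := by
      simp [hL, Matrix.toLin'_apply, Matrix.mulVec, dotProduct]
    by_cases hi : i = i₀
    · subst hi
      show L a i ∈ if i = i then Metric.ball m ε else Set.Icc (-R) R
      rw [if_pos rfl]
      have he : L a i = ∑ j, (q j : ℝ) * a j := by
        rw [hLa]; congr 1; funext j; rw [hM, Matrix.updateRow_self]
      rw [Metric.mem_ball, Real.dist_eq, he]
      exact hsl
    · show L a i ∈ if i = i₀ then Metric.ball m ε else Set.Icc (-R) R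
      rw [if_neg hi]
      have he : L a i = a i := by
        rw [hLa]
        calc ∑ j, M i j * a j = ∑ j, (1 : Matrix (Fin N) (Fin N) ℝ) i j * a j := by
              apply Finset.sum_congr rfl; intro j _; rw [hM, Matrix.updateRow_ne hi]
          _ = a i := by simp [Matrix.one_apply]
      rw [he]
      exact abs_le.mp (hbox i)
  have habs : (1:ℝ) ≤ |(q i₀ : ℝ)| := by
    have : (1:ℤ) ≤ |q i₀| := Int.one_le_abs (by exact_mod_cast hq)
    calc (1:ℝ) ≤ ((|q i₀| : ℤ) : ℝ) := by exact_mod_cast this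
      _ = |(q i₀ : ℝ)| := by push_cast; ring
  calc volume {a : Fin N → ℝ | (∀ i, |a i| ≤ R) ∧ |(∑ i, (q i : ℝ) * a i) - m| < ε}
      ≤ volume (L ⁻¹' T) := measure_mono hsub
    _ = ENNReal.ofReal |(LinearMap.det L)⁻¹| * volume T :=
        Measure.addHaar_preimage_linearMap volume hLdet0 T
    _ ≤ 1 * volume T := by
        gcongr
        rw [hLdet]
        apply ENNReal.ofReal_le_one.mpr
        rw [abs_inv]
        exact inv_le_one_of_one_le₀ habs
    _ = volume T := one_mul _
    _ ≤ ENNReal.ofReal (2 * ε) * (ENNReal.ofReal (2 * R)) ^ (N - 1) := by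
        rw [hT, volume_pi_pi]
        rw [← Finset.mul_prod_erase Finset.univ _ (Finset.mem_univ i₀)]
        rw [if_pos rfl]
        have h2 : ∏ i ∈ Finset.univ.erase i₀,
            volume (if i = i₀ then Metric.ball m ε else Set.Icc (-R) R)
            = (ENNReal.ofReal (2 * R)) ^ (N - 1) := by
          have : ∀ i ∈ Finset.univ.erase i₀,
              volume (if i = i₀ then Metric.ball m ε else Set.Icc (-R) R)
                = ENNReal.ofReal (2 * R) := by
            intro i hi
            rw [if_neg (Finset.ne_of_mem_erase hi), Real.volume_Icc]
            congr 1; ring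
          rw [Finset.prod_congr rfl this, Finset.prod_const,
            Finset.card_erase_of_mem (Finset.mem_univ i₀), Finset.card_univ, Fintype.card_fin]
        rw [h2]
        gcongr
        exact le_of_eq (Real.volume_ball m ε)


noncomputable def g (k : ℤ) : ENNReal := ENNReal.ofReal (((1 + |(k : ℝ)|) ^ 2)⁻¹)

lemma g_summable : Summable (fun k : ℤ => ((1 + |(k : ℝ)|) ^ 2)⁻¹) := by
  have base : Summable (fun n : ℕ => (((n : ℝ) + 1) ^ 2)⁻¹) := by
    have h := (summable_nat_add_iff (f := fun n : ℕ => (((n : ℝ)) ^ 2)⁻¹) 1).mpr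
      (by simpa [one_div] using Real.summable_one_div_nat_pow.mpr one_lt_two)
    simpa using h
  apply Summable.of_nat_of_neg
  · apply base.congr
    intro n; congr 1; ring_nf; simp [abs_of_nonneg, add_comm]
  · apply base.congr
    intro n; congr 1; ring_nf; simp [abs_of_nonneg, add_comm]

lemma T_lt_top : (∑' k : ℤ, g k) < ⊤ := by
  rw [show (fun k : ℤ => g k) = fun k : ℤ => ENNReal.ofReal (((1 + |(k : ℝ)|) ^ 2)⁻¹) from rfl,
    ← ENNReal.ofReal_tsum_of_nonneg (fun k => by positivity) g_summable]
  exact ENNReal.ofReal_lt_top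

lemma tsum_prod_g : ∀ (k : ℕ), (∑' q : Fin k → ℤ, ∏ i, g (q i)) = (∑' j : ℤ, g j) ^ k := by
  intro k
  induction k with
  | zero =>
    rw [pow_zero]
    rw [show (fun q : Fin 0 → ℤ => ∏ i, g (q i)) = fun _ => 1 by funext q; simp]
    exact tsum_eq_single 0 (fun b hb => absurd (Subsingleton.elim b 0) hb) |>.trans rfl
  | succ k ih =>
    set e : (ℤ × (Fin k → ℤ)) ≃ (Fin (k+1) → ℤ) := Fin.consEquiv (fun _ => ℤ) with hedef
    rw [← Equiv.tsum_eq e (fun q => ∏ i, g (q i))]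
    have : ∀ p : ℤ × (Fin k → ℤ), (∏ i, g ((e p) i)) = g p.1 * ∏ i, g (p.2 i) := by
      intro p
      have he : ∀ i, (e p) i = (Fin.cons p.1 p.2 : ∀ _ : Fin (k+1), ℤ) i := by
        intro i; rw [hedef]; rfl
      rw [Finset.prod_congr rfl (fun i _ => by rw [he i]), Fin.prod_univ_succ]
      simp
    rw [tsum_congr this, ENNReal.tsum_prod']
    calc (∑' (a : ℤ) (b : Fin k → ℤ), g a * ∏ i, g (b i))
        = ∑' (a : ℤ), g a * ∑' (b : Fin k → ℤ), ∏ i, g (b i) := by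
          congr 1; funext a; exact ENNReal.tsum_mul_left
      _ = (∑' j : ℤ, g j) * (∑' j : ℤ, g j) ^ k := by rw [ih, ENNReal.tsum_mul_right]
      _ = (∑' j : ℤ, g j) ^ (k + 1) := by ring


noncomputable def dlt (N : ℕ) : ℝ := 2 * N + 2

lemma dlt_pos (N : ℕ) : 0 < dlt N := by unfold dlt; positivity

def Cov (N R : ℕ) (c : ℝ) (q : Fin N → ℤ) (m : ℤ) : Set (Fin N → ℝ) :=
  {a | (∀ i, |a i| ≤ (R : ℝ)) ∧ q ≠ 0 ∧
    |(∑ i, (q i : ℝ) * a i) - (m : ℝ)| < c * (Nq q) ^ (-(dlt N))}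

lemma N_pos_of_ne {q : Fin N → ℤ} (hq : q ≠ 0) : 1 ≤ N := by
  by_contra h
  push_neg at h
  interval_cases N
  exact hq (funext fun i => i.elim0)

lemma m_count (R : ℕ) {c : ℝ} (hc0 : 0 < c) (hc1 : c ≤ 1) {q : Fin N → ℤ} (hq : q ≠ 0)
    {m : ℤ} (h : (Cov N R c q m).Nonempty) :
    m ∈ Finset.Icc (-(((N * R + 1) * Bq q : ℕ) : ℤ)) (((N * R + 1) * Bq q : ℕ) : ℤ) := by
  have hN := N_pos_of_ne hq
  obtain ⟨a, hbox, -, hlt⟩ := h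
  have h1 : |∑ i, (q i : ℝ) * a i| ≤ (N : ℝ) * (Bq q * R) := by
    calc |∑ i, (q i : ℝ) * a i| ≤ ∑ i, |(q i : ℝ) * a i| := Finset.abs_sum_le_sum_abs _ _
      _ ≤ ∑ _i : Fin N, (Bq q : ℝ) * R := by
          apply Finset.sum_le_sum
          intro i _
          rw [abs_mul]
          exact mul_le_mul (abs_le_Bq q i) (hbox i) (abs_nonneg _) (Nat.cast_nonneg _)
      _ = (N : ℝ) * (Bq q * R) := by rw [Finset.sum_const, Finset.card_univ, Fintype.card_fin,
            nsmul_eq_mul]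
  have h2 : c * (Nq q) ^ (-(dlt N)) ≤ 1 := by
    have := Real.rpow_le_one_of_one_le_of_nonpos (one_le_Nq hN hq) (neg_nonpos.mpr (dlt_pos N).le)
    calc c * (Nq q) ^ (-(dlt N)) ≤ 1 * 1 := by
          apply mul_le_mul hc1 this (Real.rpow_nonneg (Real.sqrt_nonneg _) _) zero_le_one
      _ = 1 := one_mul 1
  have hm : |(m : ℝ)| ≤ (((N * R + 1) * Bq q : ℕ) : ℝ) := by
    have hB1 : (1 : ℝ) ≤ (Bq q : ℝ) := by exact_mod_cast one_le_Bq hq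
    have h3 : |(m : ℝ)| ≤ |∑ i, (q i : ℝ) * a i| + |(∑ i, (q i : ℝ) * a i) - (m : ℝ)| := by
      calc |(m : ℝ)| = |(∑ i, (q i : ℝ) * a i) - ((∑ i, (q i : ℝ) * a i) - (m : ℝ))| := by
            congr 1; ring
        _ ≤ _ := abs_sub _ _
    have h4 : |(∑ i, (q i : ℝ) * a i) - (m : ℝ)| ≤ 1 := le_trans hlt.le h2
    push_cast
    nlinarith [h3, h1, h4, hB1, mul_nonneg (mul_nonneg (Nat.cast_nonneg (α := ℝ) N)
      (Nat.cast_nonneg (α := ℝ) R)) (sub_nonneg.mpr hB1)]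
  exact Finset.mem_Icc.mpr (abs_le.mp (by exact_mod_cast hm))

noncomputable def CE (N R : ℕ) : ENNReal :=
  ((3 * (N * R + 1) : ℕ) : ENNReal) *
    (ENNReal.ofReal 2 * (ENNReal.ofReal ((4:ℝ) ^ N) * (ENNReal.ofReal (2 * R)) ^ (N - 1)))

lemma CE_ne_top (N R : ℕ) : CE N R ≠ ⊤ := by
  unfold CE
  apply ENNReal.mul_ne_top (ENNReal.natCast_ne_top _)
  apply ENNReal.mul_ne_top ENNReal.ofReal_ne_top
  exact ENNReal.mul_ne_top ENNReal.ofReal_ne_top (ENNReal.pow_ne_top ENNReal.ofReal_ne_top)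

lemma q_tsum (R : ℕ) {c : ℝ} (hc0 : 0 < c) (hc1 : c ≤ 1) (q : Fin N → ℤ) :
    (∑' m : ℤ, volume (Cov N R c q m)) ≤
      ENNReal.ofReal c * CE N R * ∏ i, g (q i) := by
  by_cases hq : q = 0
  · have he : ∀ m : ℤ, Cov N R c q m = ∅ := by
      intro m; ext a; simp [Cov, hq]
    simp [he]
  · have hN := N_pos_of_ne hq
    have hB1 : (1 : ℝ) ≤ (Bq q : ℝ) := by exact_mod_cast one_le_Bq hq
    have hBpos : (0 : ℝ) < (Bq q : ℝ) := lt_of_lt_of_le one_pos hB1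
    set KK : ℕ := (N * R + 1) * Bq q with hKK
    have hKK1 : 1 ≤ KK := by
      have := one_le_Bq hq
      calc 1 = 1 * 1 := (one_mul 1).symm
        _ ≤ (N * R + 1) * Bq q := Nat.mul_le_mul (by omega) this
    set SB : ENNReal := ENNReal.ofReal (2 * (c * (Bq q : ℝ) ^ (-(dlt N)))) *
      (ENNReal.ofReal (2 * R)) ^ (N - 1) with hSB
    have hslab : ∀ m : ℤ, volume (Cov N R c q m) ≤ SB := by
      intro m
      obtain ⟨i₀, hi₀⟩ := Function.ne_iff.mp hq
      have hi₀' : q i₀ ≠ 0 := by simpa using hi₀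
      have hsub : Cov N R c q m ⊆
          {a : Fin N → ℝ | (∀ i, |a i| ≤ (R:ℝ)) ∧
            |(∑ i, (q i : ℝ) * a i) - (m : ℝ)| < c * (Nq q) ^ (-(dlt N))} := by
        intro a ⟨h1, _, h3⟩; exact ⟨h1, h3⟩
      calc volume (Cov N R c q m) ≤ _ := measure_mono hsub
        _ ≤ ENNReal.ofReal (2 * (c * (Nq q) ^ (-(dlt N)))) *
              (ENNReal.ofReal (2 * R)) ^ (N - 1) := slab_vol hi₀' _ _ _
        _ ≤ SB := by
            rw [hSB]
            refine mul_le_mul_left (ENNReal.ofReal_le_ofReal ?_) _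
            have : (Nq q) ^ (-(dlt N)) ≤ (Bq q : ℝ) ^ (-(dlt N)) :=
              Real.rpow_le_rpow_of_nonpos hBpos (Bq_le_Nq hN q) (neg_nonpos.mpr (dlt_pos N).le)
            nlinarith [hc0.le]
    have hstep1 : (∑' m : ℤ, volume (Cov N R c q m)) ≤
        ∑' m : ℤ, (if m ∈ Finset.Icc (-(KK : ℤ)) (KK : ℤ) then SB else 0) := by
      apply ENNReal.tsum_le_tsum
      intro m
      by_cases hm : m ∈ Finset.Icc (-(KK : ℤ)) (KK : ℤ)
      · rw [if_pos hm]; exact hslab m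
      · rw [if_neg hm]
        have : Cov N R c q m = ∅ := by
          rw [Set.eq_empty_iff_forall_notMem]
          intro a ha
          exact hm (m_count R hc0 hc1 hq ⟨a, ha⟩)
        simp [this]
    have hstep2 : (∑' m : ℤ, (if m ∈ Finset.Icc (-(KK : ℤ)) (KK : ℤ) then SB else 0))
        ≤ ((3 * KK : ℕ) : ENNReal) * SB := by
      rw [tsum_eq_sum (s := Finset.Icc (-(KK : ℤ)) (KK : ℤ))
        (fun m hm => by rw [if_neg hm])]
      rw [Finset.sum_congr rfl (fun m hm => if_pos hm), Finset.sum_const, nsmul_eq_mul]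
      gcongr
      have hcard : (Finset.Icc (-(KK : ℤ)) (KK : ℤ)).card = 2 * KK + 1 := by
        rw [Int.card_Icc]
        omega
      rw [hcard]
      exact_mod_cast Nat.cast_le.mpr (by omega : 2 * KK + 1 ≤ 3 * KK)
    have hreal : (Bq q : ℝ) * (2 * (c * (Bq q : ℝ) ^ (-(dlt N)))) ≤
        c * (2 * ((4:ℝ) ^ N * ∏ i, ((1 + |(q i : ℝ)|) ^ 2)⁻¹)) := by
      have hrw : (Bq q : ℝ) * (Bq q : ℝ) ^ (-(dlt N)) = (Bq q : ℝ) ^ ((1 : ℝ) + -(dlt N)) := by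
        rw [Real.rpow_add hBpos, Real.rpow_one]
      have hexp : (Bq q : ℝ) ^ ((1 : ℝ) + -(dlt N)) ≤ (Bq q : ℝ) ^ (-(2 * N : ℝ)) := by
        apply Real.rpow_le_rpow_of_exponent_le hB1
        unfold dlt; push_cast; linarith
      have hnp : (Bq q : ℝ) ^ (-(2 * N : ℝ)) = ((Bq q : ℝ) ^ (2 * N))⁻¹ := by
        rw [Real.rpow_neg hBpos.le, show ((2 * N : ℝ)) = ((2 * N : ℕ) : ℝ) by push_cast; ring,
          Real.rpow_natCast]
      have hfac : ∀ i : Fin N, (1 + |(q i : ℝ)|) ^ 2 ≤ 4 * (Bq q : ℝ) ^ 2 := by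
        intro i
        have := abs_le_Bq q i
        nlinarith [abs_nonneg ((q i : ℝ))]
      have hprod : (∏ i, (1 + |(q i : ℝ)|) ^ 2) ≤ (4:ℝ) ^ N * (Bq q : ℝ) ^ (2 * N) := by
        calc (∏ i, (1 + |(q i : ℝ)|) ^ 2) ≤ ∏ _i : Fin N, 4 * (Bq q : ℝ) ^ 2 := by
              apply Finset.prod_le_prod (fun i _ => by positivity) (fun i _ => hfac i)
          _ = (4:ℝ) ^ N * (Bq q : ℝ) ^ (2 * N) := by
              rw [Finset.prod_const, Finset.card_univ, Fintype.card_fin, mul_pow, ← pow_mul,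
                Nat.mul_comm 2 N]
      have hppos : (0:ℝ) < ∏ i, (1 + |(q i : ℝ)|) ^ 2 := by positivity
      have hXpos : (0:ℝ) < (Bq q : ℝ) ^ (2 * N) := by positivity
      have hkey : ((Bq q : ℝ) ^ (2 * N))⁻¹ ≤ (4:ℝ) ^ N * (∏ i, (1 + |(q i : ℝ)|) ^ 2)⁻¹ := by
        have hmul : ((Bq q : ℝ) ^ (2 * N))⁻¹ * (∏ i, (1 + |(q i : ℝ)|) ^ 2) ≤ (4:ℝ) ^ N := by
          calc ((Bq q : ℝ) ^ (2 * N))⁻¹ * (∏ i, (1 + |(q i : ℝ)|) ^ 2)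
              ≤ ((Bq q : ℝ) ^ (2 * N))⁻¹ * ((4:ℝ) ^ N * (Bq q : ℝ) ^ (2 * N)) := by
                gcongr
            _ = (4:ℝ) ^ N := by field_simp
        have := (le_div_iff₀ hppos).mpr hmul
        rwa [div_eq_mul_inv] at this
      calc (Bq q : ℝ) * (2 * (c * (Bq q : ℝ) ^ (-(dlt N))))
          = 2 * c * ((Bq q : ℝ) * (Bq q : ℝ) ^ (-(dlt N))) := by ring
        _ = 2 * c * (Bq q : ℝ) ^ ((1 : ℝ) + -(dlt N)) := by rw [hrw]
        _ ≤ 2 * c * (Bq q : ℝ) ^ (-(2 * N : ℝ)) :=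
            mul_le_mul_of_nonneg_left hexp (by positivity)
        _ = 2 * c * ((Bq q : ℝ) ^ (2 * N))⁻¹ := by rw [hnp]
        _ ≤ 2 * c * ((4:ℝ) ^ N * (∏ i, (1 + |(q i : ℝ)|) ^ 2)⁻¹) :=
            mul_le_mul_of_nonneg_left hkey (by positivity)
        _ = c * (2 * ((4:ℝ) ^ N * ∏ i, ((1 + |(q i : ℝ)|) ^ 2)⁻¹)) := by
            rw [← Finset.prod_inv_distrib]; ring
    have hEN : ((Bq q : ℕ) : ENNReal) * ENNReal.ofReal (2 * (c * (Bq q : ℝ) ^ (-(dlt N)))) ≤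
        ENNReal.ofReal c * (ENNReal.ofReal 2 * (ENNReal.ofReal ((4:ℝ) ^ N) * ∏ i, g (q i))) := by
      have hl : ((Bq q : ℕ) : ENNReal) * ENNReal.ofReal (2 * (c * (Bq q : ℝ) ^ (-(dlt N))))
          = ENNReal.ofReal ((Bq q : ℝ) * (2 * (c * (Bq q : ℝ) ^ (-(dlt N))))) := by
        rw [← ENNReal.ofReal_natCast (Bq q), ← ENNReal.ofReal_mul (by positivity)]
      have hr : ENNReal.ofReal c * (ENNReal.ofReal 2 * (ENNReal.ofReal ((4:ℝ) ^ N) * ∏ i, g (q i)))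
          = ENNReal.ofReal (c * (2 * ((4:ℝ) ^ N * ∏ i, ((1 + |(q i : ℝ)|) ^ 2)⁻¹))) := by
        rw [ENNReal.ofReal_mul hc0.le, ENNReal.ofReal_mul (by norm_num : (0:ℝ) ≤ 2),
          ENNReal.ofReal_mul (by positivity : (0:ℝ) ≤ (4:ℝ)^N),
          ENNReal.ofReal_prod_of_nonneg (fun i _ => by positivity)]
        rfl
      rw [hl, hr]
      exact ENNReal.ofReal_le_ofReal hreal
    calc (∑' m : ℤ, volume (Cov N R c q m))
        ≤ ((3 * KK : ℕ) : ENNReal) * SB := le_trans hstep1 hstep2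
      _ = ((3 * (N * R + 1) : ℕ) : ENNReal) *
            (((Bq q : ℕ) : ENNReal) * ENNReal.ofReal (2 * (c * (Bq q : ℝ) ^ (-(dlt N))))) *
            (ENNReal.ofReal (2 * R)) ^ (N - 1) := by
          rw [hSB, hKK]
          push_cast
          ring
      _ ≤ ((3 * (N * R + 1) : ℕ) : ENNReal) *
            (ENNReal.ofReal c * (ENNReal.ofReal 2 *
              (ENNReal.ofReal ((4:ℝ) ^ N) * ∏ i, g (q i)))) *
            (ENNReal.ofReal (2 * R)) ^ (N - 1) := by
          gcongr
      _ = ENNReal.ofReal c * CE N R * ∏ i, g (q i) := by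
          unfold CE
          ring


lemma box_bad_zero (N R : ℕ) :
    volume {a : Fin N → ℝ | ¬ IsDiophantineVector a ∧ ∀ i, |a i| ≤ (R : ℝ)} = 0 := by
  set S := {a : Fin N → ℝ | ¬ IsDiophantineVector a ∧ ∀ i, |a i| ≤ (R : ℝ)} with hS
  set A : ENNReal := CE N R * (∑' j : ℤ, g j) ^ N with hA
  have hAtop : A ≠ ⊤ :=
    ENNReal.mul_ne_top (CE_ne_top N R) (ENNReal.pow_ne_top T_lt_top.ne)
  have key : ∀ c : ℝ, 0 < c → c ≤ 1 → volume S ≤ ENNReal.ofReal c * A := by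
    intro c hc0 hc1
    have hcov : S ⊆ ⋃ (q : Fin N → ℤ) (m : ℤ), Cov N R c q m := by
      rintro a ⟨hbad, hbox⟩
      have hδ : ¬ IsDeltaDiophantine (dlt N) a := by
        intro h
        exact hbad ⟨dlt N, dlt_pos N, h⟩
      unfold IsDeltaDiophantine at hδ
      push_neg at hδ
      obtain ⟨q, hq0, m, hm⟩ := hδ c hc0
      refine Set.mem_iUnion.mpr ⟨q, Set.mem_iUnion.mpr ⟨m, ?_⟩⟩
      exact ⟨hbox, hq0, hm⟩
    calc volume S ≤ ∑' q : Fin N → ℤ, volume (⋃ m : ℤ, Cov N R c q m) :=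
          le_trans (measure_mono hcov) (measure_iUnion_le _)
      _ ≤ ∑' q : Fin N → ℤ, ∑' m : ℤ, volume (Cov N R c q m) :=
          ENNReal.tsum_le_tsum (fun q => measure_iUnion_le _)
      _ ≤ ∑' q : Fin N → ℤ, ENNReal.ofReal c * CE N R * ∏ i, g (q i) :=
          ENNReal.tsum_le_tsum (fun q => q_tsum R hc0 hc1 q)
      _ = ENNReal.ofReal c * CE N R * ∑' q : Fin N → ℤ, ∏ i, g (q i) :=
          ENNReal.tsum_mul_left
      _ = ENNReal.ofReal c * A := by rw [tsum_prod_g N, hA]; ring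
  have hj : ∀ j : ℕ, volume S ≤ (((j + 1 : ℕ) : ENNReal))⁻¹ * A := by
    intro j
    have hc0 : (0 : ℝ) < ((j + 1 : ℕ) : ℝ)⁻¹ := by positivity
    have hc1 : ((j + 1 : ℕ) : ℝ)⁻¹ ≤ 1 := by
      rw [inv_le_one_iff₀]
      right
      exact_mod_cast Nat.one_le_iff_ne_zero.mpr (Nat.succ_ne_zero j)
    have := key _ hc0 hc1
    rwa [ENNReal.ofReal_inv_of_pos (by positivity), ENNReal.ofReal_natCast] at this
  have hlim : Tendsto (fun j : ℕ => (((j + 1 : ℕ) : ENNReal))⁻¹ * A) atTop (𝓝 0) := by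
    have h1 : Tendsto (fun j : ℕ => (((j + 1 : ℕ) : ENNReal))⁻¹) atTop (𝓝 0) :=
      (ENNReal.tendsto_inv_nat_nhds_zero).comp (tendsto_add_atTop_nat 1)
    simpa using ENNReal.Tendsto.mul_const h1 (Or.inr hAtop)
  have := ge_of_tendsto' hlim hj
  exact le_antisymm this zero_le

lemma ae_vec (N : ℕ) : volume {a : Fin N → ℝ | ¬ IsDiophantineVector a} = 0 := by
  have hsub : {a : Fin N → ℝ | ¬ IsDiophantineVector a} ⊆
      ⋃ R : ℕ, {a : Fin N → ℝ | ¬ IsDiophantineVector a ∧ ∀ i, |a i| ≤ (R : ℝ)} := by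
    intro a ha
    refine Set.mem_iUnion.mpr ⟨⌈∑ i, |a i|⌉₊, ha, fun i => ?_⟩
    calc |a i| ≤ ∑ j, |a j| :=
          Finset.single_le_sum (f := fun j => |a j|) (fun j _ => abs_nonneg _) (Finset.mem_univ i)
      _ ≤ _ := Nat.le_ceil _
  exact measure_mono_null hsub (measure_iUnion_null fun R => box_bad_zero N R)


/-- The uncurrying measurable equivalence. -/
noncomputable def e1 (n : ℕ) : (Fin n → Fin n → ℝ) ≃ᵐ (Fin n × Fin n → ℝ) where
  toEquiv := (Equiv.curry (Fin n) (Fin n) ℝ).symm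
  measurable_toFun := measurable_pi_lambda _
    (fun p => (measurable_pi_apply p.2).comp (measurable_pi_apply p.1))
  measurable_invFun := measurable_pi_lambda _
    (fun i => measurable_pi_lambda _ (fun j => measurable_pi_apply (i, j)))

lemma e1_apply (n : ℕ) (Θ : Fin n → Fin n → ℝ) (p : Fin n × Fin n) :
    e1 n Θ p = Θ p.1 p.2 := rfl

lemma e1_mp (n : ℕ) : MeasurePreserving (e1 n) volume volume := by
  refine ⟨(e1 n).measurable, ?_⟩
  rw [show (volume : Measure (Fin n × Fin n → ℝ)) = Measure.pi fun _ => volume from volume_pi]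
  refine (Measure.pi_eq fun s hs => ?_).symm
  rw [MeasurableEquiv.map_apply]
  have hpre : (e1 n) ⁻¹' (Set.univ.pi s) =
      Set.univ.pi (fun i => Set.univ.pi (fun j => s (i, j))) := by
    ext Θ
    simp only [Set.mem_preimage, Set.mem_pi, Set.mem_univ, forall_true_left, Prod.forall]
    rfl
  rw [hpre]
  rw [volume_pi_pi]
  rw [Finset.prod_congr rfl (fun i _ => volume_pi_pi (fun j => s (i, j)))]
  exact (Fintype.prod_prod_type (f := fun p => volume (s p))).symm

/-- The reindexing measurable equivalence. -/
noncomputable def e2 (n : ℕ) : (Fin (n * n) → ℝ) ≃ᵐ (Fin n × Fin n → ℝ) :=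
  MeasurableEquiv.piCongrLeft (fun _ => ℝ) (finProdFinEquiv (m := n) (n := n)).symm

lemma e2_mp (n : ℕ) : MeasurePreserving (e2 n) volume volume :=
  volume_measurePreserving_piCongrLeft _ _

lemma e2_apply (n : ℕ) (b : Fin (n * n) → ℝ) (p : Fin n × Fin n) :
    e2 n b p = b (finProdFinEquiv p) := by
  unfold e2
  rw [show p = finProdFinEquiv.symm (finProdFinEquiv p) from (Equiv.symm_apply_apply _ p).symm]
  rw [MeasurableEquiv.coe_piCongrLeft]
  rw [Equiv.piCongrLeft_apply_apply]
  simp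

/-- Flattening a matrix that is a diophantine `n*n`-vector shows it is diophantine. -/
lemma mat_of_vec {n : ℕ} (hn : 1 ≤ n) (Θ : Fin n → Fin n → ℝ)
    (h : IsDiophantineVector ((e2 n).symm (e1 n Θ))) : IsDiophantineMatrix Θ := by
  obtain ⟨δ, hδ, c, hc, hb⟩ := h
  set i₀ : Fin n := ⟨0, hn⟩ with hi₀
  set b : Fin (n * n) → ℝ := (e2 n).symm (e1 n Θ) with hbdef
  have hbval : ∀ p : Fin n × Fin n, b (finProdFinEquiv p) = Θ p.1 p.2 := by
    intro p
    have : e2 n b = e1 n Θ := (e2 n).apply_symm_apply _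
    rw [← e1_apply n Θ p, ← this, e2_apply]
  refine ⟨fun j => if j = i₀ then 1 else 0, δ, hδ, c, hc, ?_⟩
  intro q hq m
  set Q : Fin (n * n) → ℤ :=
    fun k => if (finProdFinEquiv.symm k).2 = i₀ then q (finProdFinEquiv.symm k).1 else 0 with hQ
  have hQval : ∀ p : Fin n × Fin n, Q (finProdFinEquiv p) = if p.2 = i₀ then q p.1 else 0 := by
    intro p; rw [hQ]; simp
  have hQne : Q ≠ 0 := by
    obtain ⟨i, hi⟩ := Function.ne_iff.mp hq
    intro h0
    apply hi
    have := congrFun h0 (finProdFinEquiv (i, i₀))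
    rwa [hQval (i, i₀), if_pos rfl] at this
  have hsum2 : (∑ k, ((Q k : ℝ)) ^ 2) = ∑ i, ((q i : ℝ)) ^ 2 := by
    rw [← Equiv.sum_comp (finProdFinEquiv (m := n) (n := n)) (fun k => ((Q k : ℝ)) ^ 2)]
    rw [Finset.sum_congr rfl (fun p _ => by rw [hQval p])]
    rw [Fintype.sum_prod_type]
    apply Finset.sum_congr rfl
    intro i _
    simp
  have hsumb : (∑ k, (Q k : ℝ) * b k) = ∑ i, (q i : ℝ) * Θ i i₀ := by
    rw [← Equiv.sum_comp (finProdFinEquiv (m := n) (n := n)) (fun k => (Q k : ℝ) * b k)]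
    rw [Finset.sum_congr rfl (fun p _ => by rw [hQval p, hbval p])]
    rw [Fintype.sum_prod_type]
    apply Finset.sum_congr rfl
    intro i _
    simp
  calc c * (Real.sqrt (∑ i, ((q i : ℝ)) ^ 2)) ^ (-δ)
      ≤ |(∑ i, (q i : ℝ) * Θ i i₀) - (m : ℝ)| := by
        rw [← hsumb, ← hsum2]; exact hb Q hQne m
    _ = _ := by
        congr 1
        congr 1
        apply Finset.sum_congr rfl
        intro i _
        show (q i : ℝ) * Θ i i₀ = (q i : ℝ) * ∑ j, Θ i j * (((if j = i₀ then (1:ℤ) else 0) : ℤ) : ℝ)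
        congr 1
        simp


end ADM

theorem ae_isDiophantineMatrix (n : ℕ) (hn : 1 ≤ n) :
    MeasureTheory.volume {Θ : Fin n → Fin n → ℝ | ¬ IsDiophantineMatrix Θ} = 0 := by
  have hMP : MeasurePreserving (fun Θ : Fin n → Fin n → ℝ => (ADM.e2 n).symm (ADM.e1 n Θ))
      volume volume := ((ADM.e2_mp n).symm _).comp (ADM.e1_mp n)
  set B := {a : Fin (n * n) → ℝ | ¬ IsDiophantineVector a} with hB
  have hB0 : volume B = 0 := ADM.ae_vec (n * n)
  have hB'0 : volume (toMeasurable volume B) = 0 := by rwa [measure_toMeasurable]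
  have hsub : {Θ : Fin n → Fin n → ℝ | ¬ IsDiophantineMatrix Θ} ⊆
      (fun Θ : Fin n → Fin n → ℝ => (ADM.e2 n).symm (ADM.e1 n Θ)) ⁻¹' (toMeasurable volume B) := by
    intro Θ hΘ
    apply subset_toMeasurable
    intro h
    exact hΘ (ADM.mat_of_vec hn Θ h)
  apply measure_mono_null hsub
  rw [hMP.measure_preimage (measurableSet_toMeasurable _ _).nullMeasurableSet]
  exact hB'0
end
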